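/- A reaction network admits a positive steady state for some κ ∈ ℝ_{>0}^m if and only if the flux cone ℱ(𝒩) contains a strictly positive vector, i.e., ℱ(𝒩) ∩ ℝ_{>0}^m ≠ ∅. -/
import Mathlib


open Matrix BigOperators

/-- Mass-action rate vector: `v j (κ, x) = κ_j ∏_i x_i ^ μ_{ij}`. -/
noncomputable def vRate {s m : ℕ} (μ : Fin s → Fin m → ℕ) (κ : Fin m → ℝ)
    (x : Fin s → ℝ) : Fin m → ℝ :=
  fun j => κ j * ∏ i, x i ^ μ i j

/-- Mass-action species-formation rate function `f(κ, x) = 𝒩 v(κ, x)`. -/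
noncomputable def fRate {s m : ℕ} (N : Matrix (Fin s) (Fin m) ℝ)
    (μ : Fin s → Fin m → ℕ) (κ : Fin m → ℝ) (x : Fin s → ℝ) : Fin s → ℝ :=
  N.mulVec (vRate μ κ x)

/-- The flux cone `ℱ(𝒩) = {α ∈ ℝ_{≥0}^m : 𝒩 α = 0}`. -/
def fluxCone {s m : ℕ} (N : Matrix (Fin s) (Fin m) ℝ) : Set (Fin m → ℝ) :=
  {α | (∀ j, 0 ≤ α j) ∧ N.mulVec α = 0}

/-- a reaction network admits a positive steady state for some positive
rate constants `κ` if and only if the flux cone `ℱ(𝒩)` contains a strictly positive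
vector. -/
theorem exists_positive_steady_state_iff_fluxCone_pos
    {s m : ℕ} (μ ν : Fin s → Fin m → ℕ)
    (hdiff : ∀ j, ∃ i, μ i j ≠ ν i j)
    (N : Matrix (Fin s) (Fin m) ℝ)
    (hN : ∀ i j, N i j = (ν i j : ℝ) - (μ i j : ℝ)) :
    (∃ (κ : Fin m → ℝ) (x : Fin s → ℝ),
        (∀ j, 0 < κ j) ∧ (∀ i, 0 < x i) ∧ fRate N μ κ x = 0) ↔
      ∃ α ∈ fluxCone N, ∀ j, 0 < α j := by
  constructor
  · rintro ⟨κ, x, hκ, hx, hf⟩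
    refine ⟨vRate μ κ x, ⟨fun j => ?_, hf⟩, fun j => ?_⟩ <;>
    · have : 0 < vRate μ κ x j :=
        mul_pos (hκ j) (Finset.prod_pos fun i _ => pow_pos (hx i) _)
      first | exact this.le | exact this
  · rintro ⟨α, ⟨hα0, hαN⟩, hαpos⟩
    refine ⟨α, fun _ => 1, hαpos, fun _ => one_pos, ?_⟩
    have hv : vRate μ α (fun _ => 1) = α := by
      funext j; simp [vRate]
    simp [fRate, hv, hαN]
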